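/- Let q = a + bi + cj + dk be an integer quaternion such that q i conj(q) is primitive. Then the Gaussian integers a + bi and c - di are coprime in ℤ[i]. -/

import Mathlib

open Quaternion

/-- An integer quaternion is primitive if no integer `m > 1` divides all four of
its coefficients. -/
def QuatPrimitive (q : ℍ[ℤ]) : Prop :=
  ∀ m : ℤ, 1 < m → ¬(m ∣ q.re ∧ m ∣ q.imI ∧ m ∣ q.imJ ∧ m ∣ q.imK)

/-- Any Gaussian prime divides (the image of) some rational prime. -/
lemma gaussian_prime_dvd_nat_prime (π : GaussianInt) (hπ : Prime π) :
    ∃ p : ℕ, p.Prime ∧ π ∣ (p : GaussianInt) := by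
  have hnz : π ≠ 0 := hπ.ne_zero
  have h0 : π ∣ ((π.norm : ℤ) : GaussianInt) := ⟨star π, Zsqrtd.norm_eq_mul_conj π⟩
  have hnorm : π ∣ ((π.norm.natAbs : ℤ) : GaussianInt) := by
    rcases Int.natAbs_eq π.norm with h | h
    · rwa [← h]
    · have heq : ((π.norm.natAbs : ℤ) : GaussianInt) = -((π.norm : ℤ) : GaussianInt) := by
        rw [h]; simp
      rw [heq]; exact dvd_neg.mpr h0
  have hpos : 0 < π.norm.natAbs := by
    rw [Int.natAbs_pos]
    exact fun h => hnz (Zsqrtd.norm_eq_zero_iff (by norm_num) π |>.mp h)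
  -- strong induction on n
  suffices H : ∀ n : ℕ, 0 < n → π ∣ ((n : ℤ) : GaussianInt) →
      ∃ p : ℕ, p.Prime ∧ π ∣ (p : GaussianInt) from H _ hpos hnorm
  intro n
  induction n using Nat.strong_induction_on with
  | _ n ih =>
    intro hn hd
    rcases eq_or_ne n 1 with rfl | h1
    · exact absurd (isUnit_of_dvd_one (by simpa using hd)) hπ.not_unit
    · obtain ⟨p, hp, hpd⟩ := Nat.exists_prime_and_dvd h1
      obtain ⟨k, hk⟩ := hpd
      have hcast : ((n : ℤ) : GaussianInt) = (p : GaussianInt) * ((k : ℤ) : GaussianInt) := by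
        push_cast [hk]; ring
      rcases hπ.2.2 _ _ (hcast ▸ hd) with h | h
      · exact ⟨p, hp, h⟩
      · have hk0 : 0 < k := by
          rcases Nat.eq_zero_or_pos k with rfl | h; · simp [hk] at hn
          exact h
        have hklt : k < n := by
          have := hp.two_le
          calc k < 2 * k := by omega
          _ ≤ p * k := Nat.mul_le_mul_right k (by omega)
          _ = n := hk.symm
        exact ih k hklt hk0 h

/-- If a Gaussian prime divides a rational prime `p` and an integer `n`, then `p ∣ n`. -/
lemma int_dvd_of_gaussian_dvd {π : GaussianInt} (hπ : Prime π) {p : ℕ} (hp : p.Prime)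
    (hdp : π ∣ (p : GaussianInt)) {n : ℤ} (hdn : π ∣ ((n : ℤ) : GaussianInt)) :
    (p : ℤ) ∣ n := by
  by_contra hnd
  have hcop : IsCoprime (p : ℤ) n := by
    rw [Int.isCoprime_iff_gcd_eq_one]
    rw [Int.gcd]
    simp only [Int.natAbs_natCast]
    exact (Nat.Prime.coprime_iff_not_dvd hp).mpr
      (fun h => hnd (Int.natCast_dvd_natCast.mpr h |>.trans (Int.natAbs_dvd.mpr dvd_rfl)))
  have := (hcop.map (Int.castRingHom GaussianInt)).isUnit_of_dvd'
    (by simpa using hdp) (by simpa using hdn)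
  exact hπ.not_unit this

/-- If `q = a + bi + cj + dk` is an integer quaternion with `q i conj q`
primitive, then the Gaussian integers `a + bi` and `c - di` are coprime. -/
theorem gaussian_coprime_of_primitive (a b c d : ℤ) (q : ℍ[ℤ])
    (hq : q = ⟨a, b, c, d⟩)
    (hprim : QuatPrimitive (q * ⟨0, 1, 0, 0⟩ * star q)) :
    IsCoprime (⟨a, b⟩ : GaussianInt) (⟨c, -d⟩ : GaussianInt) := by
  subst hq
  have hre : ((⟨a, b, c, d⟩ : ℍ[ℤ]) * ⟨0, 1, 0, 0⟩ * star ⟨a, b, c, d⟩).re = 0 := by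
    simp [Quaternion.re_mul, Quaternion.imI_mul, Quaternion.imJ_mul, Quaternion.imK_mul]
    ring
  have himI : ((⟨a, b, c, d⟩ : ℍ[ℤ]) * ⟨0, 1, 0, 0⟩ * star ⟨a, b, c, d⟩).imI
      = a^2 + b^2 - c^2 - d^2 := by
    simp [Quaternion.re_mul, Quaternion.imI_mul, Quaternion.imJ_mul, Quaternion.imK_mul]
    ring
  have himJ : ((⟨a, b, c, d⟩ : ℍ[ℤ]) * ⟨0, 1, 0, 0⟩ * star ⟨a, b, c, d⟩).imJ
      = 2 * (a*d + b*c) := by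
    simp [Quaternion.re_mul, Quaternion.imI_mul, Quaternion.imJ_mul, Quaternion.imK_mul]
    ring
  have himK : ((⟨a, b, c, d⟩ : ℍ[ℤ]) * ⟨0, 1, 0, 0⟩ * star ⟨a, b, c, d⟩).imK
      = 2 * (b*d - a*c) := by
    simp [Quaternion.re_mul, Quaternion.imI_mul, Quaternion.imJ_mul, Quaternion.imK_mul]
    ring
  by_contra hcop
  classical
  -- obtain a common prime divisor of z = a+bi and w = c-di
  set z : GaussianInt := ⟨a, b⟩
  set w : GaussianInt := ⟨c, -d⟩
  obtain ⟨π, hπ, hπz, hπw⟩ : ∃ π : GaussianInt, Prime π ∧ π ∣ z ∧ π ∣ w := by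
    have hgu : ¬IsUnit (EuclideanDomain.gcd z w) := fun h =>
      hcop (EuclideanDomain.gcd_isUnit_iff.mp h)
    rcases eq_or_ne (EuclideanDomain.gcd z w) 0 with hg0 | hg0
    · -- then z = w = 0, so a = b = c = d = 0 and primitivity fails for m = 2
      obtain ⟨hz0, hw0⟩ := EuclideanDomain.gcd_eq_zero_iff.mp hg0
      exfalso
      have ha : a = 0 := congrArg Zsqrtd.re hz0
      have hb : b = 0 := congrArg Zsqrtd.im hz0
      have hc : c = 0 := congrArg Zsqrtd.re hw0
      have hd : d = 0 := by have := congrArg Zsqrtd.im hw0; simpa [w] using this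
      exact hprim 2 (by norm_num)
        ⟨by erw [hre]; exact dvd_zero _, by erw [himI, ha, hb, hc, hd]; norm_num,
         by erw [himJ, ha, hb]; norm_num, by erw [himK, ha, hc]; norm_num⟩
    · obtain ⟨π, hirr, hdvd⟩ := WfDvdMonoid.exists_irreducible_factor hgu hg0
      exact ⟨π, hirr.prime,
        hdvd.trans (EuclideanDomain.gcd_dvd_left z w),
        hdvd.trans (EuclideanDomain.gcd_dvd_right z w)⟩
  obtain ⟨p, hp, hπp⟩ := gaussian_prime_dvd_nat_prime π hπ
  -- the four key divisibilities in ℤ[i]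
  have h1 : π ∣ ((a^2 + b^2 : ℤ) : GaussianInt) := by
    have : z * star z = ((a^2 + b^2 : ℤ) : GaussianInt) := by
      ext <;> simp only [z, Zsqrtd.re_mul, Zsqrtd.im_mul, Zsqrtd.re_star, Zsqrtd.im_star,
        Zsqrtd.re_intCast, Zsqrtd.im_intCast] <;> ring
    exact this ▸ hπz.mul_right _
  have h2 : π ∣ ((c^2 + d^2 : ℤ) : GaussianInt) := by
    have : w * star w = ((c^2 + d^2 : ℤ) : GaussianInt) := by
      ext <;> simp only [w, Zsqrtd.re_mul, Zsqrtd.im_mul, Zsqrtd.re_star, Zsqrtd.im_star,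
        Zsqrtd.re_intCast, Zsqrtd.im_intCast] <;> ring
    exact this ▸ hπw.mul_right _
  have h3 : π ∣ ((2*(a*c - b*d) : ℤ) : GaussianInt) := by
    have : z * ⟨c, d⟩ + (⟨a, -b⟩ : GaussianInt) * w = ((2*(a*c - b*d) : ℤ) : GaussianInt) := by
      ext <;> simp only [z, w, Zsqrtd.re_add, Zsqrtd.im_add, Zsqrtd.re_mul, Zsqrtd.im_mul,
        Zsqrtd.re_intCast, Zsqrtd.im_intCast] <;> ring
    exact this ▸ dvd_add (hπz.mul_right _) (hπw.mul_left _)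
  have h4 : π ∣ ((2*(a*d + b*c) : ℤ) : GaussianInt) := by
    have : (z * ⟨c, d⟩ - (⟨a, -b⟩ : GaussianInt) * w) * ⟨0, -1⟩
        = ((2*(a*d + b*c) : ℤ) : GaussianInt) := by
      ext <;> simp only [z, w, Zsqrtd.re_sub, Zsqrtd.im_sub, Zsqrtd.re_mul, Zsqrtd.im_mul,
        Zsqrtd.re_intCast, Zsqrtd.im_intCast] <;> ring
    exact this ▸ ((dvd_sub (hπz.mul_right _) (hπw.mul_left _)).mul_right _)
  -- transfer to ℤ
  have p1 : (p : ℤ) ∣ a^2 + b^2 := int_dvd_of_gaussian_dvd hπ hp hπp h1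
  have p2 : (p : ℤ) ∣ c^2 + d^2 := int_dvd_of_gaussian_dvd hπ hp hπp h2
  have p3 : (p : ℤ) ∣ 2*(a*c - b*d) := int_dvd_of_gaussian_dvd hπ hp hπp h3
  have p4 : (p : ℤ) ∣ 2*(a*d + b*c) := int_dvd_of_gaussian_dvd hπ hp hπp h4
  refine hprim (p : ℤ) (by exact_mod_cast hp.one_lt) ?_
  refine ⟨by erw [hre]; exact dvd_zero _, ?_, ?_, ?_⟩
  · erw [himI]; have := dvd_sub p1 p2; convert this using 1; rfl; ring
  · erw [himJ]; exact p4
  · erw [himK]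
    have := p3.neg_right
    convert this using 1; rfl; ring
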